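/- Let m, n, s be natural numbers and set r = |m − n| + 2s. Then Σ_{j+k = r+1, j,k ≥ 0} (−1)^j p_m^{(j)}(0) · p_n^{(k)}(0) = 0, where p^{(j)} denotes the j-th derivative. -/

import Mathlib

open MeasureTheory intervalIntegral

/-- Shifted Legendre polynomial `p n x = (1/n!) dⁿ/dxⁿ (xⁿ(x-1)ⁿ)`. -/
noncomputable def shiftedLegendre (n : ℕ) : ℝ → ℝ :=
  fun x => (1 / (Nat.factorial n) : ℝ) * iteratedDeriv n (fun t : ℝ => t ^ n * (t - 1) ^ n) x

namespace Stmt13Aux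

open Polynomial

/-- The base polynomial `x^k (x-1)^k`. -/
noncomputable def F (k : ℕ) : ℝ[X] := X ^ k * (X - 1) ^ k

/-- Polynomial version of the shifted Legendre polynomial. -/
noncomputable def P (k : ℕ) : ℝ[X] := C ((1 : ℝ) / k.factorial) * derivative^[k] (F k)

/-- The integral over `[0,1]` of a polynomial. -/
noncomputable def L (p : ℝ[X]) : ℝ := ∫ x in (0:ℝ)..1, eval x p

lemma L_deriv (p : ℝ[X]) : L (derivative p) = eval 1 p - eval 0 p := by
  unfold L
  exact intervalIntegral.integral_eq_sub_of_hasDerivAt (fun x _ => p.hasDerivAt x)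
    ((p.derivative.continuous).intervalIntegrable _ _)

lemma L_add (p q : ℝ[X]) : L (p + q) = L p + L q := by
  unfold L
  simp only [eval_add]
  exact intervalIntegral.integral_add ((p.continuous).intervalIntegrable _ _)
    ((q.continuous).intervalIntegrable _ _)

lemma L_sub (p q : ℝ[X]) : L (p - q) = L p - L q := by
  unfold L
  simp only [eval_sub]
  exact intervalIntegral.integral_sub ((p.continuous).intervalIntegrable _ _)
    ((q.continuous).intervalIntegrable _ _)

lemma L_Cmul (c : ℝ) (p : ℝ[X]) : L (C c * p) = c * L p := by
  unfold L
  simp only [eval_mul, eval_C]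
  exact intervalIntegral.integral_const_mul _ _

/-- One step of integration by parts. -/
lemma L_step (f g : ℝ[X]) (h0 : eval 0 f = 0) (h1 : eval 1 f = 0) :
    L (derivative f * g) = - L (f * derivative g) := by
  have hd := L_deriv (f * g)
  rw [derivative_mul, L_add] at hd
  simp [eval_mul, h0, h1] at hd
  linarith

/-- Iterated integration by parts. -/
lemma L_ibp (m : ℕ) (f : ℝ[X]) (h0 : ∀ i < m, eval 0 (derivative^[i] f) = 0)
    (h1 : ∀ i < m, eval 1 (derivative^[i] f) = 0) (g : ℝ[X]) :
    L (derivative^[m] f * g) = (-1 : ℝ) ^ m * L (f * derivative^[m] g) := by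
  induction m generalizing g with
  | zero => simp
  | succ k ih =>
    rw [Function.iterate_succ_apply',
      L_step _ _ (h0 k (Nat.lt_succ_self k)) (h1 k (Nat.lt_succ_self k)),
      ih (fun i hi => h0 i (hi.trans (Nat.lt_succ_self k)))
        (fun i hi => h1 i (hi.trans (Nat.lt_succ_self k))) (derivative g),
      ← Function.iterate_succ_apply]
    ring

lemma eval0_iter_F (k i : ℕ) (hi : i < k) : eval 0 (derivative^[i] (F k)) = 0 := by
  have h : (X : ℝ[X]) ^ k ∣ F k := dvd_mul_right _ _
  obtain ⟨q, hq⟩ := pow_sub_dvd_iterate_derivative_of_pow_dvd i h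
  rw [hq]
  have : k - i ≠ 0 := by omega
  simp [this]

lemma comp_one_sub_F (k i : ℕ) :
    (derivative^[i] (F k)).comp (1 - X) = (-1 : ℝ[X]) ^ i * derivative^[i] (F k) := by
  have hb : (F k).comp (1 - X) = F k := by
    unfold F
    rw [mul_comp, pow_comp, pow_comp, X_comp, sub_comp, X_comp, one_comp,
      ← mul_pow, ← mul_pow]
    congr 1
    ring
  have h := iterate_derivative_comp_one_sub_X (F k) i
  rw [hb] at h
  have h2 : ((-1 : ℝ[X]) ^ i) * ((-1 : ℝ[X]) ^ i) = 1 := by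
    rw [← pow_add]
    exact Even.neg_one_pow ⟨i, rfl⟩
  calc (derivative^[i] (F k)).comp (1 - X)
      = (((-1 : ℝ[X]) ^ i) * ((-1 : ℝ[X]) ^ i)) * (derivative^[i] (F k)).comp (1 - X) := by
        rw [h2, one_mul]
    _ = (-1 : ℝ[X]) ^ i * ((-1 : ℝ[X]) ^ i * (derivative^[i] (F k)).comp (1 - X)) := by ring
    _ = (-1 : ℝ[X]) ^ i * derivative^[i] (F k) := by rw [← h]

lemma eval1_iter_F (k i : ℕ) :
    eval 1 (derivative^[i] (F k)) = (-1 : ℝ) ^ i * eval 0 (derivative^[i] (F k)) := by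
  have h := congrArg (eval 0) (comp_one_sub_F k i)
  rw [eval_comp] at h
  simpa using h

lemma eval1_iter_F_of_lt (k i : ℕ) (hi : i < k) : eval 1 (derivative^[i] (F k)) = 0 := by
  rw [eval1_iter_F, eval0_iter_F k i hi, mul_zero]

lemma iter_P (k j : ℕ) :
    derivative^[j] (P k) = C ((1 : ℝ) / k.factorial) * derivative^[k + j] (F k) := by
  unfold P
  rw [iterate_derivative_C_mul, ← Function.iterate_add_apply, Nat.add_comm j k]

lemma eval1_iter_P (k j : ℕ) :
    eval 1 (derivative^[j] (P k)) = (-1 : ℝ) ^ (k + j) * eval 0 (derivative^[j] (P k)) := by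
  rw [iter_P]
  simp only [eval_mul, eval_C]
  rw [eval1_iter_F]
  ring

lemma natDegree_P_le (k : ℕ) : (P k).natDegree ≤ k := by
  unfold P
  refine (natDegree_C_mul_le _ _).trans ?_
  refine (natDegree_iterate_derivative _ _).trans ?_
  have : (F k).natDegree ≤ 2 * k := by
    unfold F
    refine natDegree_mul_le.trans ?_
    have h1 : ((X : ℝ[X]) ^ k).natDegree ≤ k := by simp
    have h2 : (((X : ℝ[X]) - 1) ^ k).natDegree ≤ k := by
      refine (natDegree_pow_le).trans ?_
      have : ((X : ℝ[X]) - 1).natDegree ≤ 1 := by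
        have := natDegree_X_sub_C (1 : ℝ)
        simpa using this.le
      nlinarith
    omega
  omega

/-- `L (P a * derivative^[N+1] (P b)) = 0` provided `b < a + N + 1`. -/
lemma L_orth (a b N : ℕ) (hb : b < a + N + 1) :
    L (P a * derivative^[N + 1] (P b)) = 0 := by
  rw [show P a = C ((1 : ℝ) / a.factorial) * derivative^[a] (F a) from rfl]
  rw [mul_assoc, L_Cmul,
    L_ibp a (F a) (fun i hi => eval0_iter_F a i hi) (fun i hi => eval1_iter_F_of_lt a i hi)]
  have hz : derivative^[a] (derivative^[N + 1] (P b)) = 0 := by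
    rw [← Function.iterate_add_apply]
    exact iterate_derivative_eq_zero (lt_of_le_of_lt (natDegree_P_le b) (by omega))
  rw [hz, mul_zero]
  unfold L
  simp

lemma polyIteratedDeriv (p : ℝ[X]) (k : ℕ) :
    iteratedDeriv k (fun x => eval x p) = fun x => eval x (derivative^[k] p) := by
  induction k with
  | zero => simp
  | succ k ih =>
    rw [iteratedDeriv_succ, ih]
    funext x
    rw [Function.iterate_succ_apply']
    exact ((derivative^[k] p).hasDerivAt x).deriv

lemma shiftedLegendre_eq (k : ℕ) : _root_.shiftedLegendre k = fun x => eval x (P k) := by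
  funext x
  have hF : (fun t : ℝ => t ^ k * (t - 1) ^ k) = fun t => eval t (F k) := by
    funext t; simp [F]
  rw [_root_.shiftedLegendre, hF, polyIteratedDeriv]
  simp [P]

end Stmt13Aux

open Stmt13Aux Polynomial in
theorem stmt13 (m n s : ℕ) :
    ∑ j ∈ Finset.range (((m : ℤ) - n).natAbs + 2 * s + 2),
        (-1 : ℝ) ^ j * iteratedDeriv j (_root_.shiftedLegendre m) 0 *
          iteratedDeriv ((((m : ℤ) - n).natAbs + 2 * s + 1) - j) (_root_.shiftedLegendre n) 0 = 0 := by
  set N : ℕ := ((m : ℤ) - n).natAbs + 2 * s + 1 with hN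
  have hNm : n < m + N + 1 := by omega
  have hNn : m < n + N + 1 := by omega
  have hodd : Odd (m + n + N) := by
    rw [Nat.odd_iff]
    omega
  -- the auxiliary polynomial W
  set W : ℝ[X] := ∑ j ∈ Finset.range (N + 1),
    C ((-1 : ℝ) ^ j) * (derivative^[j] (P m) * derivative^[N - j] (P n)) with hW
  set g : ℕ → ℝ[X] := fun j =>
    C ((-1 : ℝ) ^ j) * (derivative^[j] (P m) * derivative^[N + 1 - j] (P n)) with hg
  have hDW : derivative W = g 0 - g (N + 1) := by
    rw [hW, derivative_sum, ← Finset.sum_range_sub' g (N + 1)]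
    refine Finset.sum_congr rfl fun j hj => ?_
    have hjN : j ≤ N := by
      have := Finset.mem_range.mp hj; omega
    simp only [hg]
    rw [derivative_C_mul, derivative_mul]
    have e1 : N + 1 - j = (N - j) + 1 := by omega
    have e2 : N + 1 - (j + 1) = N - j := by omega
    rw [e1, e2, Function.iterate_succ_apply' derivative j (P m),
      Function.iterate_succ_apply' derivative (N - j) (P n)]
    have hpw : ((-1 : ℝ) ^ (j + 1)) = -((-1 : ℝ) ^ j) := by ring
    rw [hpw]
    simp only [map_neg]
    ring
  have hLDW : L (derivative W) = 0 := by
    rw [hDW, L_sub]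
    have hg0 : g 0 = P m * derivative^[N + 1] (P n) := by
      simp only [hg]
      simp
    have hgN : g (N + 1) = C ((-1 : ℝ) ^ (N + 1)) * (derivative^[N + 1] (P m) * P n) := by
      simp only [hg]
      simp
    rw [hg0, hgN, L_Cmul, L_orth m n N hNm,
      show (derivative^[N + 1] (P m) * P n) = P n * derivative^[N + 1] (P m) from mul_comm _ _,
      L_orth n m N hNn]
    ring
  have hLDW' : L (derivative W) = eval 1 W - eval 0 W := L_deriv W
  -- symmetry : eval 1 W = - eval 0 W
  have hsym : eval 1 W = - eval 0 W := by
    rw [hW, eval_finset_sum, eval_finset_sum, ← Finset.sum_neg_distrib]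
    refine Finset.sum_congr rfl fun j hj => ?_
    have hjN : j ≤ N := by
      have := Finset.mem_range.mp hj; omega
    simp only [eval_mul, eval_C]
    rw [eval1_iter_P, eval1_iter_P]
    have key : (-1 : ℝ) ^ j * (-1 : ℝ) ^ (m + j) * (-1 : ℝ) ^ (n + (N - j))
        = -(-1 : ℝ) ^ j := by
      rw [← pow_add, ← pow_add]
      have hc := Nat.sub_add_cancel hjN
      have hexp : j + (m + j) + (n + (N - j)) = (m + n + N) + j := by omega
      rw [hexp, pow_add, hodd.neg_one_pow]
      ring
    linear_combination (eval 0 (derivative^[j] (P m)) *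
      eval 0 (derivative^[N - j] (P n))) * key
  have hW0 : eval 0 W = 0 := by
    have : eval 1 W - eval 0 W = 0 := by rw [← hLDW']; exact hLDW
    rw [hsym] at this
    linarith
  -- conclude
  have hfinal : ∑ j ∈ Finset.range (N + 1),
      (-1 : ℝ) ^ j * iteratedDeriv j (_root_.shiftedLegendre m) 0 *
        iteratedDeriv (N - j) (_root_.shiftedLegendre n) 0 = eval 0 W := by
    rw [hW, eval_finset_sum]
    refine Finset.sum_congr rfl fun j hj => ?_
    rw [shiftedLegendre_eq m, shiftedLegendre_eq n, polyIteratedDeriv, polyIteratedDeriv]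
    simp only [eval_mul, eval_C]
    ring
  have hrange : ((m : ℤ) - n).natAbs + 2 * s + 2 = N + 1 := by omega
  rw [hrange]
  calc ∑ j ∈ Finset.range (N + 1),
      (-1 : ℝ) ^ j * iteratedDeriv j (_root_.shiftedLegendre m) 0 *
        iteratedDeriv (N - j) (_root_.shiftedLegendre n) 0 = eval 0 W := hfinal
    _ = 0 := hW0
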